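/- arXiv:1508.00385 — 3 statements merged into one kernel-verified Lean document; each statement's English description precedes it below -/
import Mathlib

section
/- Let n ≥ 4, and let γ_2 ≥ ... ≥ γ_{n-1} ≥ 0 be reals summing to n−2 with 2 ≥ γ_2 ≥ β for some 1 < β ≤ 2. Then e^{-1} + e + ∑_{i=2}^{n-1} e^{γ_i − 1} ≥ e^{-1} + e + e^{β−1} + (n−3)·e^{(1−β)/(n−3)}. -/
open Real BigOperators

lemma tangent_exp (c x : ℝ) : Real.exp c * (x - c + 1) ≤ Real.exp x := by
  have h := Real.add_one_le_exp (x - c)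
  have h2 := mul_le_mul_of_nonneg_left h (le_of_lt (Real.exp_pos c))
  rw [← Real.exp_add] at h2
  have : c + (x - c) = x := by ring
  rw [this] at h2
  linarith [h2]

theorem stmt_10 {n : ℕ} (hn : 4 ≤ n) (γ : Fin (n - 2) → ℝ) (hmono : Antitone γ)
    (hpos : ∀ i, 0 ≤ γ i) (hsum : ∑ i, γ i = (n : ℝ) - 2) (β : ℝ)
    (hβ1 : 1 < β) (hβ2 : β ≤ 2) (hub : γ ⟨0, by omega⟩ ≤ 2) (hlb : β ≤ γ ⟨0, by omega⟩) :
    Real.exp (-1) + Real.exp 1 + ∑ i, Real.exp (γ i - 1) ≥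
      Real.exp (-1) + Real.exp 1 + Real.exp (β - 1) +
        ((n : ℝ) - 3) * Real.exp ((1 - β) / ((n : ℝ) - 3)) := by
  have hn4 : (4:ℝ) ≤ (n:ℝ) := by exact_mod_cast hn
  set m : ℝ := (n:ℝ) - 3 with hm
  have hm0 : 0 < m := by rw [hm]; linarith
  set i0 : Fin (n-2) := ⟨0, by omega⟩ with hi0
  set t : ℝ := γ i0 with ht
  set c : ℝ := (1 - t)/m with hc
  set d : ℝ := (1 - β)/m with hd
  set s : Finset (Fin (n-2)) := Finset.univ.erase i0 with hs
  have hcard : (s.card : ℝ) = m := by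
    rw [hs, Finset.card_erase_of_mem (Finset.mem_univ _)]
    simp only [Finset.card_univ, Fintype.card_fin]
    rw [hm]
    have : n - 2 - 1 = n - 3 := by omega
    rw [this]
    have : ((n - 3 : ℕ) : ℝ) = (n:ℝ) - 3 := by
      push_cast [Nat.cast_sub (by omega : 3 ≤ n)]; ring
    rw [this]
  have hsplit : ∀ f : Fin (n-2) → ℝ, ∑ i, f i = f i0 + ∑ i ∈ s, f i := by
    intro f
    rw [hs, ← Finset.add_sum_erase _ f (Finset.mem_univ i0)]
  have hssum : ∑ i ∈ s, γ i = (n:ℝ) - 2 - t := by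
    have := hsplit γ; rw [hsum] at this; linarith
  have hmc : m * c = 1 - t := by rw [hc]; field_simp
  have hmd : m * d = 1 - β := by rw [hd]; field_simp
  -- Jensen via tangent line
  have hstep1 : ∑ i ∈ s, Real.exp (γ i - 1) ≥ m * Real.exp c := by
    have h1 : ∑ i ∈ s, Real.exp c * ((γ i - 1) - c + 1) ≤ ∑ i ∈ s, Real.exp (γ i - 1) :=
      Finset.sum_le_sum fun i _ => tangent_exp c (γ i - 1)
    have h2 : ∑ i ∈ s, Real.exp c * ((γ i - 1) - c + 1)
        = Real.exp c * (((n:ℝ) - 2 - t) - (s.card : ℝ) * c) := by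
      rw [← Finset.mul_sum]
      congr 1
      have heq : ∀ i ∈ s, γ i - 1 - c + 1 = γ i - c := fun i _ => by ring
      rw [Finset.sum_congr rfl heq, Finset.sum_sub_distrib, hssum, Finset.sum_const,
        nsmul_eq_mul]
    rw [h2, hcard] at h1
    have : ((n:ℝ) - 2 - t) - m * c = m := by rw [hmc]; rw [hm]; ring
    rw [this] at h1
    linarith [h1]
  -- monotonicity step
  have hstep2 : Real.exp (t - 1) + m * Real.exp c ≥ Real.exp (β - 1) + m * Real.exp d := by
    have hA : Real.exp (β - 1) * ((t - 1) - (β - 1) + 1) ≤ Real.exp (t - 1) :=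
      tangent_exp (β - 1) (t - 1)
    have hB : Real.exp d * (c - d + 1) ≤ Real.exp c := tangent_exp d c
    have hd0 : Real.exp d ≤ 1 := by
      rw [Real.exp_le_one_iff, hd]
      apply div_nonpos_of_nonpos_of_nonneg <;> linarith
    have hb0 : 1 ≤ Real.exp (β - 1) := by
      rw [Real.one_le_exp_iff]; linarith
    have hdc : m * (c - d) = β - t := by rw [mul_sub, hmc, hmd]; ring
    have htβ : β ≤ t := hlb
    have hedpos := Real.exp_pos d
    -- m * exp d - m * exp c ≤ exp d * m * (d - c) = exp d * (t - β) ≤ exp (β-1) * (t - β)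
    -- ≤ exp(t-1) - exp(β-1)
    have h1 : m * Real.exp d - m * Real.exp c ≤ Real.exp d * (t - β) := by
      have := mul_le_mul_of_nonneg_left hB (le_of_lt hm0)
      nlinarith [hdc]
    have h2 : Real.exp d * (t - β) ≤ Real.exp (β - 1) * (t - β) := by
      apply mul_le_mul_of_nonneg_right _ (by linarith)
      linarith
    have h3 : Real.exp (β - 1) * (t - β) ≤ Real.exp (t - 1) - Real.exp (β - 1) := by
      nlinarith [hA]
    linarith
  have := hsplit (fun i => Real.exp (γ i - 1))
  rw [this]
  have : Real.exp (γ i0 - 1) = Real.exp (t - 1) := by rw [ht]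
  rw [this]
  linarith [hstep1, hstep2]
end

section
/- Let G be a connected bipartite graph on n ≥ 3 vertices with normalized Laplacian eigenvalues γ_1 = 2 > γ_2 ≥ ... ≥ γ_{n-1} > γ_n = 0. Then the normalized Laplacian energy NE(G) = ∑_{i=1}^n |γ_i − 1| satisfies NE(G) ≤ 2 + √(a(n−2)), where a = 2∑_{(i,j)∈E} 1/(d_i d_j) − 2. -/
open Matrix Real BigOperators Finset

/-- Normalized Laplacian `L(G) = I - D^{-1/2} A D^{-1/2}`. -/
noncomputable def normLap {n : ℕ} (G : SimpleGraph (Fin n)) [DecidableRel G.Adj] :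
    Matrix (Fin n) (Fin n) ℝ :=
  1 - (Matrix.diagonal fun i => ((G.degree i : ℝ)) ^ (-(1:ℝ)/2)) * G.adjMatrix ℝ *
      (Matrix.diagonal fun i => ((G.degree i : ℝ)) ^ (-(1:ℝ)/2))

/-- Randić index `R_{-1}(G) = ∑_{(i,j)∈E} 1/(d_i d_j)` (each unordered edge counted once). -/
noncomputable def randic {n : ℕ} (G : SimpleGraph (Fin n)) [DecidableRel G.Adj] : ℝ :=
  (1/2) * ∑ i, ∑ j ∈ G.neighborFinset i, (1 : ℝ) / (G.degree i * G.degree j)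



lemma trace_conj' {m : Type*} [Fintype m] [DecidableEq m] (U D : Matrix m m ℝ)
    (hU : star U * U = 1) : (U * D * star U).trace = D.trace := by
  rw [Matrix.trace_mul_cycle, hU, Matrix.one_mul]

lemma trace_eq_sum_eig {m : Type*} [Fintype m] [DecidableEq m]
    {A : Matrix m m ℝ} (hA : A.IsHermitian) :
    A.trace = ∑ i, hA.eigenvalues i := by
  conv_lhs => rw [hA.spectral_theorem, Unitary.conjStarAlgAut_apply]
  rw [trace_conj' _ _ hA.eigenvectorUnitary.prop.1, Matrix.trace_diagonal]
  simp

lemma trace_sq_eq_sum_eig_sq {m : Type*} [Fintype m] [DecidableEq m]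
    {A : Matrix m m ℝ} (hA : A.IsHermitian) :
    (A * A).trace = ∑ i, hA.eigenvalues i ^ 2 := by
  set U : Matrix m m ℝ := ↑hA.eigenvectorUnitary with hUdef
  set D : Matrix m m ℝ := Matrix.diagonal ((RCLike.ofReal ∘ hA.eigenvalues : m → ℝ)) with hDdef
  have hU1 : star U * U = 1 := hA.eigenvectorUnitary.prop.1
  have e1 : (U * D * star U) * (U * D * star U) = U * (D * D) * star U := by
    simp only [Matrix.mul_assoc]
    rw [← Matrix.mul_assoc (star U) U, hU1, Matrix.one_mul]
  conv_lhs => rw [hA.spectral_theorem, Unitary.conjStarAlgAut_apply, ← hUdef, ← hDdef, e1]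
  rw [trace_conj' _ _ hU1, hDdef, Matrix.diagonal_mul_diagonal, Matrix.trace_diagonal]
  simp [sq]
lemma normLap_apply {n : ℕ} (G : SimpleGraph (Fin n)) [DecidableRel G.Adj] (i j : Fin n) :
    normLap G i j = (if i = j then (1:ℝ) else 0) -
      ((G.degree i : ℝ)) ^ (-(1:ℝ)/2) * (if G.Adj i j then (1:ℝ) else 0) *
      ((G.degree j : ℝ)) ^ (-(1:ℝ)/2) := by
  rw [normLap, Matrix.sub_apply, Matrix.mul_diagonal, Matrix.diagonal_mul,
    Matrix.one_apply, SimpleGraph.adjMatrix_apply]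

lemma normLap_prod {n : ℕ} (G : SimpleGraph (Fin n)) [DecidableRel G.Adj]
    (hd : ∀ k, 0 < G.degree k) (i j : Fin n) :
    normLap G i j * normLap G j i = (if i = j then (1:ℝ) else 0) +
      (if G.Adj i j then 1 / ((G.degree i : ℝ) * (G.degree j : ℝ)) else 0) := by
  have hc : ∀ k : Fin n, ((G.degree k:ℝ))^(-(1:ℝ)/2) * ((G.degree k:ℝ))^(-(1:ℝ)/2)
      = ((G.degree k:ℝ))⁻¹ := by
    intro k
    have h0 : (0:ℝ) < (G.degree k : ℝ) := by exact_mod_cast hd k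
    rw [← Real.rpow_add h0, show (-(1:ℝ)/2 + -(1:ℝ)/2) = -1 by norm_num, Real.rpow_neg_one]
  rw [normLap_apply, normLap_apply]
  by_cases hij : i = j
  · subst hij
    simp [SimpleGraph.irrefl]
  · have hji : ¬ j = i := fun h => hij h.symm
    by_cases hadj : G.Adj i j
    · have hadj' : G.Adj j i := hadj.symm
      simp only [if_neg hij, if_neg hji, if_pos hadj, if_pos hadj']
      rw [zero_sub, zero_sub, neg_mul_neg]
      rw [one_div, mul_inv]
      rw [← hc i, ← hc j]; ring
    · have hadj' : ¬ G.Adj j i := fun h => hadj h.symm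
      simp [if_neg hij, if_neg hji, if_neg hadj, if_neg hadj']

lemma trace_normLap {n : ℕ} (G : SimpleGraph (Fin n)) [DecidableRel G.Adj] :
    (normLap G).trace = n := by
  rw [Matrix.trace]
  simp [Matrix.diag, normLap_apply, SimpleGraph.irrefl]

lemma trace_normLap_sq {n : ℕ} (G : SimpleGraph (Fin n)) [DecidableRel G.Adj]
    (hd : ∀ k, 0 < G.degree k) :
    (normLap G * normLap G).trace = n + 2 * randic G := by
  rw [Matrix.trace]
  have key : ∀ i, (normLap G * normLap G).diag i
      = 1 + ∑ j ∈ G.neighborFinset i, (1 : ℝ) / (G.degree i * G.degree j) := by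
    intro i
    rw [Matrix.diag_apply, Matrix.mul_apply,
      Finset.sum_congr rfl (fun j _ => normLap_prod G hd i j), Finset.sum_add_distrib]
    congr 1
    · simp
    · rw [SimpleGraph.neighborFinset_eq_filter, Finset.sum_filter]
  rw [Finset.sum_congr rfl (fun i _ => key i), Finset.sum_add_distrib, randic,
    Finset.sum_const, Finset.card_univ, Fintype.card_fin, nsmul_eq_mul, mul_one]
  ring

theorem stmt_13 {n : ℕ} (hn : 3 ≤ n) (G : SimpleGraph (Fin n)) [DecidableRel G.Adj]
    (hG : G.Connected) (hbip : G.Colorable 2) (hL : (normLap G).IsHermitian)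
    (γ : Fin n → ℝ) (e : Equiv.Perm (Fin n)) (hγ : ∀ i, γ i = hL.eigenvalues (e i))
    (hmono : Antitone γ)
    (hfirst : γ ⟨0, by omega⟩ = 2) (hstrict1 : γ ⟨1, by omega⟩ < γ ⟨0, by omega⟩)
    (hlast : γ ⟨n - 1, by omega⟩ = 0)
    (hstrict2 : γ ⟨n - 1, by omega⟩ < γ ⟨n - 2, by omega⟩) :
    ∑ i, |γ i - 1| ≤ 2 + Real.sqrt ((2 * randic G - 2) * ((n : ℝ) - 2)) := by
  classical
  have hd : ∀ k, 0 < G.degree k := by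
    intro k
    rw [G.degree_pos_iff_exists_adj]
    have hnt : Nontrivial (Fin n) := Fin.nontrivial_iff_two_le.mpr (by omega)
    obtain ⟨j, hj⟩ := exists_ne k
    obtain ⟨w⟩ := hG.preconnected k j
    have hw : ¬ w.Nil := SimpleGraph.Walk.not_nil_of_ne (Ne.symm hj)
    rw [SimpleGraph.Walk.not_nil_iff] at hw
    obtain ⟨u, hadj, -, -⟩ := hw
    exact ⟨u, hadj⟩
  have hsum : ∑ i, γ i = n := by
    have h1 : ∑ i, γ i = ∑ i, hL.eigenvalues i := by
      simp_rw [hγ]; exact Equiv.sum_comp e hL.eigenvalues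
    rw [h1, ← trace_eq_sum_eig hL, trace_normLap]
  have hsq : ∑ i, γ i ^ 2 = n + 2 * randic G := by
    have h1 : ∑ i, γ i ^ 2 = ∑ i, hL.eigenvalues i ^ 2 := by
      simp_rw [hγ]; exact Equiv.sum_comp e (fun i => hL.eigenvalues i ^ 2)
    rw [h1, ← trace_sq_eq_sum_eig_sq hL, trace_normLap_sq G hd]
  set i0 : Fin n := ⟨0, by omega⟩ with hi0
  set il : Fin n := ⟨n - 1, by omega⟩ with hil
  have hne : i0 ≠ il := by
    simp only [hi0, hil, Fin.mk.injEq, ne_eq]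
    omega
  set F : Finset (Fin n) := Finset.univ \ {i0, il} with hF
  have hsub : ({i0, il} : Finset (Fin n)) ⊆ Finset.univ := Finset.subset_univ _
  have hcard : (F.card : ℝ) = (n : ℝ) - 2 := by
    have hc : F.card = n - 2 := by
      rw [hF, Finset.card_sdiff_of_subset hsub, Finset.card_univ, Fintype.card_fin,
        Finset.card_pair hne]
    rw [hc, Nat.cast_sub (by omega : 2 ≤ n)]
    norm_num
  have hsplit : ∑ i, |γ i - 1| = (∑ i ∈ F, |γ i - 1|) + (|γ i0 - 1| + |γ il - 1|) := by
    rw [← Finset.sum_pair (f := fun i => |γ i - 1|) hne]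
    exact (Finset.sum_sdiff hsub).symm
  have hv0 : |γ i0 - 1| = 1 := by rw [hfirst]; norm_num
  have hvl : |γ il - 1| = 1 := by rw [hlast]; norm_num
  have htot : ∑ i, (γ i - 1) ^ 2 = 2 * randic G := by
    have e2 : ∑ i, (γ i - 1) ^ 2 = (∑ i, γ i ^ 2) - 2 * (∑ i, γ i) + n := by
      simp_rw [sub_sq, one_pow, mul_one]
      rw [Finset.sum_add_distrib, Finset.sum_sub_distrib, ← Finset.mul_sum,
        Finset.sum_const, Finset.card_univ, Fintype.card_fin, nsmul_eq_mul, mul_one]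
    rw [e2, hsq, hsum]; ring
  have hsqF : ∑ i ∈ F, (γ i - 1) ^ 2 = 2 * randic G - 2 := by
    have hsp2 : ∑ i, (γ i - 1) ^ 2
        = (∑ i ∈ F, (γ i - 1) ^ 2) + ((γ i0 - 1) ^ 2 + (γ il - 1) ^ 2) := by
      rw [← Finset.sum_pair (f := fun i => (γ i - 1) ^ 2) hne]
      exact (Finset.sum_sdiff hsub).symm
    have h0 : (γ i0 - 1) ^ 2 = 1 := by rw [hfirst]; norm_num
    have hl2 : (γ il - 1) ^ 2 = 1 := by rw [hlast]; norm_num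
    rw [htot, h0, hl2] at hsp2
    linarith
  have hCS : ∑ i ∈ F, |γ i - 1| ≤ Real.sqrt ((2 * randic G - 2) * ((n : ℝ) - 2)) := by
    have h1 : (∑ i ∈ F, |γ i - 1|) ^ 2 ≤ (F.card : ℝ) * ∑ i ∈ F, |γ i - 1| ^ 2 := by
      exact_mod_cast sq_sum_le_card_mul_sum_sq (f := fun i => |γ i - 1|) (s := F)
    have h2 : ∑ i ∈ F, |γ i - 1| ^ 2 = 2 * randic G - 2 := by
      simp_rw [sq_abs]; exact hsqF
    have h3 : (∑ i ∈ F, |γ i - 1|) ^ 2 ≤ (2 * randic G - 2) * ((n : ℝ) - 2) := by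
      rw [h2, hcard] at h1; linarith [h1]
    calc ∑ i ∈ F, |γ i - 1| = Real.sqrt ((∑ i ∈ F, |γ i - 1|) ^ 2) :=
          (Real.sqrt_sq (Finset.sum_nonneg fun i _ => abs_nonneg _)).symm
      _ ≤ Real.sqrt ((2 * randic G - 2) * ((n : ℝ) - 2)) := Real.sqrt_le_sqrt h3
  rw [hsplit, hv0, hvl]
  linarith [hCS]
end

section
/- For every simple connected graph G on n ≥ 2 vertices, (2/n)·∑_{(i,j)∈E} 1/(d_i d_j) ≥ 1/(n−1), with equality if and only if G is the complete graph K_n. -/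
open Matrix Real BigOperators

section aux
variable {n : ℕ} (G : SimpleGraph (Fin n)) [DecidableRel G.Adj]

lemma aux_deg_pos (hn : 2 ≤ n) (hG : G.Connected) (v : Fin n) : 0 < G.degree v := by
  rw [G.degree_pos_iff_exists_adj]
  have : 1 < Fintype.card (Fin n) := by rw [Fintype.card_fin]; omega
  obtain ⟨w, hw⟩ := Fintype.exists_ne_of_one_lt_card this v
  obtain ⟨p⟩ := hG.preconnected v w
  exact ⟨p.getVert 1, p.adj_snd (p.not_nil_of_ne hw.symm)⟩

lemma aux_top_of_deg (hdeg : ∀ v, G.degree v = n - 1) : G = ⊤ := by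
  ext v w
  simp only [SimpleGraph.top_adj]
  constructor
  · exact fun h => h.ne
  · intro hvw
    have hsub : G.neighborFinset v ⊆ Finset.univ.erase v := by
      intro x hx
      rw [SimpleGraph.mem_neighborFinset] at hx
      exact Finset.mem_erase.mpr ⟨hx.ne', Finset.mem_univ x⟩
    have hcard : (Finset.univ.erase v).card ≤ (G.neighborFinset v).card := by
      rw [Finset.card_erase_of_mem (Finset.mem_univ v)]
      simp [SimpleGraph.card_neighborFinset_eq_degree, hdeg v]
    have := Finset.eq_of_subset_of_card_le hsub hcard
    have hw : w ∈ G.neighborFinset v := by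
      rw [this]; exact Finset.mem_erase.mpr ⟨hvw.symm, Finset.mem_univ w⟩
    rwa [SimpleGraph.mem_neighborFinset] at hw

end aux

theorem stmt_14 {n : ℕ} (hn : 2 ≤ n) (G : SimpleGraph (Fin n)) [DecidableRel G.Adj]
    (hG : G.Connected) :
    (2 / (n : ℝ)) * randic G ≥ 1 / ((n : ℝ) - 1) ∧
      ((2 / (n : ℝ)) * randic G = 1 / ((n : ℝ) - 1) ↔ G = ⊤) := by
  have hn1 : (0:ℝ) < (n:ℝ) - 1 := by
    have : (2:ℝ) ≤ n := by exact_mod_cast hn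
    linarith
  have hnpos : (0:ℝ) < n := by linarith
  have hdpos : ∀ v, (0:ℝ) < (G.degree v : ℝ) := fun v => by
    exact_mod_cast aux_deg_pos G hn hG v
  have hdle : ∀ v, (G.degree v : ℝ) ≤ (n:ℝ) - 1 := fun v => by
    have := G.degree_lt_card_verts v
    rw [Fintype.card_fin] at this
    have : (G.degree v : ℝ) + 1 ≤ n := by exact_mod_cast this
    linarith
  set S := ∑ i, ∑ j ∈ G.neighborFinset i, (1 : ℝ) / (G.degree i * G.degree j) with hS
  -- termwise bound
  have hterm : ∀ i, ∀ j ∈ G.neighborFinset i,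
      (1:ℝ) / ((G.degree i : ℝ) * ((n:ℝ)-1)) ≤ 1 / (G.degree i * G.degree j) := by
    intro i j _
    apply one_div_le_one_div_of_le
    · exact mul_pos (hdpos i) (hdpos j)
    · exact mul_le_mul_of_nonneg_left (hdle j) (hdpos i).le
  have hconst : ∀ i, ∑ _j ∈ G.neighborFinset i, (1:ℝ) / ((G.degree i : ℝ) * ((n:ℝ)-1))
      = 1 / ((n:ℝ)-1) := by
    intro i
    rw [Finset.sum_const, SimpleGraph.card_neighborFinset_eq_degree, nsmul_eq_mul,
      one_div, mul_inv, ← mul_assoc, mul_inv_cancel₀ (ne_of_gt (hdpos i)), one_mul, one_div]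
  have hlow : (n:ℝ) / ((n:ℝ)-1) ≤ S := by
    calc (n:ℝ) / ((n:ℝ)-1) = ∑ _i : Fin n, (1:ℝ)/((n:ℝ)-1) := by
          rw [Finset.sum_const, Finset.card_univ, Fintype.card_fin, nsmul_eq_mul]
          ring
      _ ≤ S := by
          apply Finset.sum_le_sum
          intro i _
          rw [← hconst i]
          exact Finset.sum_le_sum (hterm i)
  have hrw : (2 / (n : ℝ)) * randic G = S / n := by
    rw [randic]; field_simp; ring
  constructor
  · rw [ge_iff_le, hrw, le_div_iff₀ hnpos]
    calc 1 / ((n:ℝ)-1) * n = (n:ℝ)/((n:ℝ)-1) := by ring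
      _ ≤ S := hlow
  · constructor
    · intro heq
      by_contra hne
      -- some vertex has degree < n-1
      have hex : ∃ v, (G.degree v : ℝ) < (n:ℝ) - 1 := by
        by_contra hall
        push_neg at hall
        apply hne
        apply aux_top_of_deg
        intro v
        have h1 := hdle v
        have h2 := hall v
        have : (G.degree v : ℝ) = (n:ℝ) - 1 := le_antisymm h1 h2
        have : (G.degree v : ℝ) + 1 = n := by linarith
        have : (G.degree v : ℕ) + 1 = n := by exact_mod_cast this
        omega
      obtain ⟨v, hv⟩ := hex
      -- v has a neighbor u
      obtain ⟨u, hu⟩ := G.degree_pos_iff_exists_adj v |>.mp (aux_deg_pos G hn hG v)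
      -- strict inequality: S > n/(n-1)
      have hstrict : (n:ℝ) / ((n:ℝ)-1) < S := by
        have hinner : ∑ _j ∈ G.neighborFinset u, (1:ℝ)/((G.degree u : ℝ)*((n:ℝ)-1))
            < ∑ j ∈ G.neighborFinset u, (1:ℝ) / (G.degree u * G.degree j) := by
          apply Finset.sum_lt_sum (hterm u)
          refine ⟨v, (SimpleGraph.mem_neighborFinset G u v).mpr hu.symm, ?_⟩
          apply one_div_lt_one_div_of_lt
          · exact mul_pos (hdpos u) (hdpos v)
          · exact (mul_lt_mul_iff_right₀ (hdpos u)).mpr hv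
        calc (n:ℝ) / ((n:ℝ)-1) = ∑ _i : Fin n, (1:ℝ)/((n:ℝ)-1) := by
              rw [Finset.sum_const, Finset.card_univ, Fintype.card_fin, nsmul_eq_mul]; ring
          _ < S := by
              apply Finset.sum_lt_sum
              · intro i _
                rw [← hconst i]
                exact Finset.sum_le_sum (hterm i)
              · exact ⟨u, Finset.mem_univ u, by rw [← hconst u]; exact hinner⟩
      have : (2 / (n : ℝ)) * randic G > 1 / ((n:ℝ)-1) := by
        rw [hrw, gt_iff_lt, lt_div_iff₀ hnpos]
        calc 1 / ((n:ℝ)-1) * n = (n:ℝ)/((n:ℝ)-1) := by ring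
          _ < S := hstrict
      linarith
    · intro htop
      subst htop
      have hdeg : ∀ v : Fin n, ((⊤ : SimpleGraph (Fin n)).degree v : ℝ) = (n:ℝ) - 1 := by
        intro v
        have h := SimpleGraph.complete_graph_degree (V := Fin n) v
        have h2 : (⊤ : SimpleGraph (Fin n)).degree v = n - 1 := by
          convert h using 2
          rw [Fintype.card_fin]
        rw [h2]
        have : 1 ≤ n := by omega
        push_cast [this]
        ring
      rw [hrw]
      have : S = (n:ℝ)/((n:ℝ)-1) := by
        rw [hS]
        have : ∀ i : Fin n, ∑ j ∈ (⊤ : SimpleGraph (Fin n)).neighborFinset i,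
            (1:ℝ) / (((⊤:SimpleGraph (Fin n)).degree i : ℝ) * ((⊤:SimpleGraph (Fin n)).degree j : ℝ))
            = 1/((n:ℝ)-1) := by
          intro i
          have : ∀ j ∈ (⊤ : SimpleGraph (Fin n)).neighborFinset i,
              (1:ℝ) / (((⊤:SimpleGraph (Fin n)).degree i : ℝ) * ((⊤:SimpleGraph (Fin n)).degree j : ℝ))
              = 1/(((n:ℝ)-1)*((n:ℝ)-1)) := by
            intro j _
            rw [hdeg i, hdeg j]
          rw [Finset.sum_congr rfl this, Finset.sum_const,
            SimpleGraph.card_neighborFinset_eq_degree, nsmul_eq_mul]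
          have h := hdeg i
          rw [h]
          field_simp
        rw [Finset.sum_congr rfl (fun i _ => this i), Finset.sum_const, Finset.card_univ,
          Fintype.card_fin, nsmul_eq_mul]
        ring
      rw [this]
      field_simp
end
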